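/- Define G̃(θ₁,…,θ_{p-1}) = (G̃_1,…,G̃_p) = (C, ∂C/∂θ_1, …, ∂C/∂θ_{p-1}) evaluated at (θ_1,…,θ_{p-1},0). Then on the set where θ_1,…,θ_{p-1} are nonzero and pairwise distinct, for i, j ∈ {1,…,p−1}: ∂G̃_1/∂θ_i = G̃_{i+1}; for i ≠ j, ∂G̃_{j+1}/∂θ_i = (G̃_{i+1} − G̃_{j+1})/(2(θ_i − θ_j)); and ∂G̃_{i+1}/∂θ_i = G̃_{i+1} − ∑_{k ≠ i, k ≤ p−1} (G̃_{i+1} − G̃_{k+1})/(2(θ_i − θ_k)) − (G̃_{i+1} − (G̃_1 − ∑_{ℓ=1}^{p-1} G̃_{ℓ+1}))/(2θ_i). -/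

import Mathlib

open MeasureTheory

open Real Finset Metric
open scoped NNReal ENNReal

/-- The normalising constant of the Bingham distribution. -/
noncomputable def binghamC (p : ℕ) (θ : Fin p → ℝ) : ℝ :=
  ∫ x in {x : EuclideanSpace ℝ (Fin p) | ‖x‖ = 1},
    Real.exp (∑ i, θ i * x i ^ 2) ∂ μH[(p : ℝ) - 1]

namespace BinghamAux

noncomputable section

/-- Hausdorff measure of a closed ball in Euclidean space is finite. -/
lemma hmeas_closedBall_lt_top (m : ℕ) (r : ℝ) :
    μH[(m : ℝ)] (Metric.closedBall (0 : EuclideanSpace ℝ (Fin m)) r) < ⊤ := by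
  set e := WithLp.equiv 2 (Fin m → ℝ) with he
  have hj : LipschitzWith ((Fintype.card (Fin m) : ℝ≥0) ^ (1 / (2:ℝ≥0∞)).toReal) e.symm :=
    (PiLp.antilipschitzWith_ofLp 2 _).to_rightInverse e.right_inv
  have himg : Metric.closedBall (0 : EuclideanSpace ℝ (Fin m)) r
      = e.symm '' (e '' Metric.closedBall 0 r) := by
    rw [Equiv.symm_image_image]
  have h1 : μH[(m : ℝ)] (e '' Metric.closedBall 0 r) < ⊤ := by
    have hpi : (μH[(m : ℝ)] : Measure (Fin m → ℝ)) = volume := by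
      have := hausdorffMeasure_pi_real (ι := Fin m)
      simpa using this
    rw [hpi]
    have hsub : e '' Metric.closedBall 0 r ⊆ Metric.closedBall (0 : Fin m → ℝ) r := by
      rintro _ ⟨x, hx, rfl⟩
      have h2 : ‖e x‖ ≤ ‖x‖ := by
        exact (by simpa using (PiLp.lipschitzWith_ofLp 2 (fun _ : Fin m => ℝ)).dist_le_mul x 0 :
          ‖x.ofLp‖ ≤ ‖x‖)
      simp only [mem_closedBall, dist_zero_right] at hx ⊢
      exact h2.trans hx
    exact lt_of_le_of_lt (measure_mono hsub)
      (isCompact_closedBall 0 r).measure_lt_top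
  calc μH[(m : ℝ)] (Metric.closedBall (0 : EuclideanSpace ℝ (Fin m)) r)
      = μH[(m : ℝ)] (e.symm '' (e '' Metric.closedBall 0 r)) := by rw [← himg]
    _ ≤ _ * μH[(m : ℝ)] (e '' Metric.closedBall 0 r) :=
        hj.hausdorffMeasure_image_le (by positivity) _
    _ < ⊤ := ENNReal.mul_lt_top
        (ENNReal.rpow_lt_top_of_nonneg (Nat.cast_nonneg m) ENNReal.coe_ne_top) h1

variable {n : ℕ}

/-- The graph map parametrising a piece of the sphere over the hyperplane. -/
def gmap (i : Fin (n + 1)) (ε : ℝ) (y : EuclideanSpace ℝ (Fin n)) :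
    EuclideanSpace ℝ (Fin (n + 1)) :=
  (WithLp.equiv 2 _).symm
    (Fin.insertNth i (ε * Real.sqrt (1 - ∑ j, y j ^ 2)) (fun j => y j))

lemma gmap_apply_same (i : Fin (n + 1)) (ε : ℝ) (y : EuclideanSpace ℝ (Fin n)) :
    gmap i ε y i = ε * Real.sqrt (1 - ∑ j, y j ^ 2) := by
  simp [gmap]

lemma gmap_apply_succAbove (i : Fin (n + 1)) (ε : ℝ) (y : EuclideanSpace ℝ (Fin n))
    (j : Fin n) : gmap i ε y (i.succAbove j) = y j := by
  simp [gmap]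

lemma dist_gmap (i : Fin (n + 1)) (ε : ℝ) (y z : EuclideanSpace ℝ (Fin n)) :
    dist (gmap i ε y) (gmap i ε z)
      = Real.sqrt ((ε * Real.sqrt (1 - ∑ j, y j ^ 2) - ε * Real.sqrt (1 - ∑ j, z j ^ 2)) ^ 2
          + dist y z ^ 2) := by
  rw [EuclideanSpace.dist_eq, EuclideanSpace.dist_eq]
  simp only [Real.dist_eq, sq_abs]
  congr 1
  rw [Fin.sum_univ_succAbove (fun k => (gmap i ε y k - gmap i ε z k) ^ 2) i]
  rw [Real.sq_sqrt (by positivity : (0:ℝ) ≤ ∑ i_1 : Fin n, (y i_1 - z i_1) ^ 2)]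
  congr 1
  · rw [gmap_apply_same, gmap_apply_same]
  · exact Finset.sum_congr rfl fun j _ => by
      rw [gmap_apply_succAbove, gmap_apply_succAbove]

/-- The region over which the graph maps are Lipschitz. -/
def Aset (n : ℕ) : Set (EuclideanSpace ℝ (Fin n)) :=
  {y | ∑ j, y j ^ 2 ≤ 1 - 1 / (n + 1)}

lemma lipschitzOn_gmap (i : Fin (n + 1)) (ε : ℝ) (hε : ε = 1 ∨ ε = -1) :
    LipschitzOnWith (Real.toNNReal (Real.sqrt (n + 2))) (gmap i ε) (Aset n) := by
  rw [lipschitzOnWith_iff_dist_le_mul]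
  intro y hy z hz
  rw [dist_gmap]
  set d := dist y z with hd
  have hd0 : 0 ≤ d := dist_nonneg
  set a := ∑ j, y j ^ 2 with ha
  set b := ∑ j, z j ^ 2 with hb
  have hd' : d = dist y z := hd
  clear_value d
  have ha0 : 0 ≤ a := by positivity
  have hb0 : 0 ≤ b := by positivity
  have hna : (0:ℝ) < 1/(n+1) := by positivity
  have ha1 : a ≤ 1 - 1/(n+1) := hy
  have hb1 : b ≤ 1 - 1/(n+1) := hz
  have hya : ‖y‖ ^ 2 = a := by
    rw [EuclideanSpace.norm_eq, Real.sq_sqrt (by positivity)]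
    simp [Real.norm_eq_abs, sq_abs, ha]
  have hzb : ‖z‖ ^ 2 = b := by
    rw [EuclideanSpace.norm_eq, Real.sq_sqrt (by positivity)]
    simp [Real.norm_eq_abs, sq_abs, hb]
  clear_value a b
  have hy1 : ‖y‖ ≤ 1 := by nlinarith [norm_nonneg y]
  have hz1 : ‖z‖ ≤ 1 := by nlinarith [norm_nonneg z]
  have habd : |a - b| ≤ 2 * d := by
    have h1 : |‖y‖ - ‖z‖| ≤ d := by
      rw [hd, dist_eq_norm]; exact abs_norm_sub_norm_le y z
    have h2 : a - b = (‖y‖ - ‖z‖) * (‖y‖ + ‖z‖) := by rw [← hya, ← hzb]; ring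
    rw [h2, abs_mul]
    have h3 : |‖y‖ + ‖z‖| ≤ 2 := by
      rw [abs_of_nonneg (by positivity)]; linarith
    calc |‖y‖ - ‖z‖| * |‖y‖ + ‖z‖| ≤ d * 2 := mul_le_mul h1 h3 (abs_nonneg _) hd0
      _ = 2 * d := by ring
  set u := Real.sqrt (1 - a) with hu
  set v := Real.sqrt (1 - b) with hv
  have hu0 : 0 ≤ u := Real.sqrt_nonneg _
  have hv0 : 0 ≤ v := Real.sqrt_nonneg _
  have hu2 : u ^ 2 = 1 - a := Real.sq_sqrt (by linarith)
  have hv2 : v ^ 2 = 1 - b := Real.sq_sqrt (by linarith)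
  have hulb : Real.sqrt (1/(n+1)) ≤ u := Real.sqrt_le_sqrt (by linarith)
  have hvlb : Real.sqrt (1/(n+1)) ≤ v := Real.sqrt_le_sqrt (by linarith)
  have hs0 : 0 < Real.sqrt (1/(n+1)) := Real.sqrt_pos.mpr hna
  have hsq : Real.sqrt (1/(n+1)) ^ 2 = 1/(n+1) := Real.sq_sqrt hna.le
  clear_value u v
  have h4 : |u - v| * (u + v) = |a - b| := by
    have h5 : (u - v) * (u + v) = b - a := by linear_combination hu2 - hv2
    rw [← abs_of_nonneg (show (0:ℝ) ≤ u + v by positivity), ← abs_mul, h5, abs_sub_comm]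
  have key : (u - v) ^ 2 * (1/(n+1)) ≤ d ^ 2 := by
    have h6 : |u - v| * Real.sqrt (1/(n+1)) ≤ d := by
      have h7 : |u - v| * (2 * Real.sqrt (1/(n+1))) ≤ |u - v| * (u + v) :=
        mul_le_mul_of_nonneg_left (by linarith) (abs_nonneg _)
      have h8 : |u - v| * (2 * Real.sqrt (1/(n+1))) ≤ 2 * d := by
        calc |u - v| * (2 * Real.sqrt (1/(n+1))) ≤ |u - v| * (u + v) := h7
          _ = |a - b| := h4
          _ ≤ 2 * d := habd
      ring_nf at h8 ⊢
      linarith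
    calc (u - v) ^ 2 * (1/(n+1)) = (|u - v| * Real.sqrt (1/(n+1))) ^ 2 := by
          rw [mul_pow, sq_abs, hsq]
      _ ≤ d ^ 2 := pow_le_pow_left₀ (by positivity) h6 2
  have hεsq : ε ^ 2 = 1 := by rcases hε with rfl | rfl <;> norm_num
  have hfield : (1/((n:ℝ)+1)) * ((n:ℝ)+1) = 1 := by field_simp
  have hmain : (ε * u - ε * v) ^ 2 + d ^ 2 ≤ ((n:ℝ) + 2) * d ^ 2 := by
    have h9 : (ε * u - ε * v) ^ 2 = (u - v) ^ 2 := by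
      have : (ε * u - ε * v) ^ 2 = ε ^ 2 * (u - v) ^ 2 := by ring
      rw [this, hεsq, one_mul]
    rw [h9]
    nlinarith [mul_le_mul_of_nonneg_right key (show (0:ℝ) ≤ (n:ℝ)+1 by positivity),
      hfield, sq_nonneg (u - v), sq_nonneg d]
  have hcoe : (Real.toNNReal (Real.sqrt (n + 2)) : ℝ) = Real.sqrt (n + 2) :=
    Real.coe_toNNReal _ (Real.sqrt_nonneg _)
  rw [hcoe]
  calc Real.sqrt ((ε * u - ε * v) ^ 2 + d ^ 2) ≤ Real.sqrt (((n:ℝ) + 2) * d ^ 2) :=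
        Real.sqrt_le_sqrt hmain
    _ = Real.sqrt ((n:ℝ) + 2) * d := by
        rw [Real.sqrt_mul (by positivity), Real.sqrt_sq hd0]

lemma sum_sq_eq_one {N : ℕ} {x : EuclideanSpace ℝ (Fin N)} (hx : ‖x‖ = 1) :
    ∑ k, x k ^ 2 = 1 := by
  have h := hx
  rw [EuclideanSpace.norm_eq] at h
  have h2 : ∑ i, ‖x i‖ ^ 2 = 1 := Real.sqrt_eq_one.mp h
  simpa [Real.norm_eq_abs, sq_abs] using h2

lemma sq_le_one_of_norm_one {N : ℕ} {x : EuclideanSpace ℝ (Fin N)} (hx : ‖x‖ = 1) (k : Fin N) :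
    x k ^ 2 ≤ 1 := by
  have h := sum_sq_eq_one hx
  have : ∑ j ∈ Finset.univ.erase k, x j ^ 2 ≥ 0 := by positivity
  have hsplit := Finset.add_sum_erase Finset.univ (fun j => x j ^ 2) (Finset.mem_univ k)
  simp only at hsplit
  linarith

lemma abs_coord_le_one {N : ℕ} {x : EuclideanSpace ℝ (Fin N)} (hx : ‖x‖ = 1) (k : Fin N) :
    |x k| ≤ 1 := by
  rw [← Real.sqrt_one, ← Real.sqrt_sq_eq_abs]
  exact Real.sqrt_le_sqrt (sq_le_one_of_norm_one hx k)

lemma sphere_subset_cover (n : ℕ) :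
    {x : EuclideanSpace ℝ (Fin (n+1)) | ‖x‖ = 1} ⊆
      (⋃ i : Fin (n+1), gmap i 1 '' Aset n) ∪ (⋃ i : Fin (n+1), gmap i (-1) '' Aset n) := by
  intro x hx
  have hsum : ∑ k, x k ^ 2 = 1 := sum_sq_eq_one hx
  have hexists : ∃ i, 1/((n:ℝ)+1) ≤ x i ^ 2 := by
    by_contra h
    push_neg at h
    have hlt : ∑ k, x k ^ 2 < ∑ _k : Fin (n+1), 1/((n:ℝ)+1) :=
      Finset.sum_lt_sum_of_nonempty Finset.univ_nonempty (fun k _ => h k)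
    rw [Finset.sum_const, Finset.card_univ, Fintype.card_fin, nsmul_eq_mul] at hlt
    rw [hsum] at hlt
    have : ((n:ℝ)+1) * (1/((n:ℝ)+1)) = 1 := by field_simp
    push_cast at hlt
    linarith
  obtain ⟨i, hi⟩ := hexists
  set y : EuclideanSpace ℝ (Fin n) :=
    (WithLp.equiv 2 _).symm (fun j => x (i.succAbove j)) with hy
  have hyj : ∀ j, y j = x (i.succAbove j) := fun j => rfl
  have hsplit : x i ^ 2 + ∑ j, y j ^ 2 = 1 := by
    rw [← hsum, Fin.sum_univ_succAbove (fun k => x k ^ 2) i]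
    simp only [hyj]
  have hyA : y ∈ Aset n := by
    simp only [Aset, Set.mem_setOf_eq]
    linarith
  have hsq : Real.sqrt (1 - ∑ j, y j ^ 2) = |x i| := by
    rw [show 1 - ∑ j, y j ^ 2 = x i ^ 2 by linarith, Real.sqrt_sq_eq_abs]
  rcases le_or_gt 0 (x i) with hpos | hneg
  · left
    refine Set.mem_iUnion.mpr ⟨i, ⟨y, hyA, ?_⟩⟩
    ext k
    refine Fin.succAboveCases i ?_ ?_ k
    · rw [gmap_apply_same, hsq, one_mul, abs_of_nonneg hpos]
    · intro j
      rw [gmap_apply_succAbove, hyj]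
  · right
    refine Set.mem_iUnion.mpr ⟨i, ⟨y, hyA, ?_⟩⟩
    ext k
    refine Fin.succAboveCases i ?_ ?_ k
    · rw [gmap_apply_same, hsq, abs_of_neg hneg]
      ring
    · intro j
      rw [gmap_apply_succAbove, hyj]

lemma Aset_hmeas_lt_top (n : ℕ) : μH[(n : ℝ)] (Aset n) < ⊤ := by
  refine lt_of_le_of_lt (measure_mono ?_) (hmeas_closedBall_lt_top n 1)
  intro y hy
  simp only [Aset, Set.mem_setOf_eq] at hy
  have h1 : ∑ j, y j ^ 2 ≤ 1 := by
    have : (0:ℝ) < 1/((n:ℝ)+1) := by positivity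
    linarith
  simp only [Metric.mem_closedBall, dist_zero_right]
  rw [EuclideanSpace.norm_eq]
  rw [show ∑ i, ‖y i‖ ^ 2 = ∑ j, y j ^ 2 by simp [Real.norm_eq_abs, sq_abs]]
  exact Real.sqrt_le_one.mpr h1

lemma graph_hmeas_lt_top (n : ℕ) (i : Fin (n+1)) (ε : ℝ) (hε : ε = 1 ∨ ε = -1) :
    μH[(n : ℝ)] (gmap i ε '' Aset n) < ⊤ := by
  refine lt_of_le_of_lt ((lipschitzOn_gmap i ε hε).hausdorffMeasure_image_le
    (Nat.cast_nonneg n)) ?_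
  exact ENNReal.mul_lt_top
    (ENNReal.rpow_lt_top_of_nonneg (Nat.cast_nonneg n) ENNReal.coe_ne_top)
    (Aset_hmeas_lt_top n)

lemma sphere_hmeas_lt_top (n : ℕ) :
    μH[(n : ℝ)] {x : EuclideanSpace ℝ (Fin (n+1)) | ‖x‖ = 1} < ⊤ := by
  refine lt_of_le_of_lt (measure_mono (sphere_subset_cover n)) ?_
  refine lt_of_le_of_lt (measure_union_le _ _) ?_
  refine ENNReal.add_lt_top.mpr ⟨?_, ?_⟩ <;>
  · refine lt_of_le_of_lt (measure_iUnion_fintype_le _ _) ?_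
    refine ENNReal.sum_lt_top.mpr fun i _ => ?_
    exact graph_hmeas_lt_top n i _ (by norm_num)

/-! ### The sphere measure -/

/-- The unit sphere. -/
def Sph (n : ℕ) : Set (EuclideanSpace ℝ (Fin (n+1))) := {x | ‖x‖ = 1}

lemma measurableSet_Sph (n : ℕ) : MeasurableSet (Sph n) :=
  (isClosed_eq continuous_norm continuous_const).measurableSet

/-- The surface measure on the sphere. -/
def sμ (n : ℕ) : Measure (EuclideanSpace ℝ (Fin (n+1))) :=
  (μH[(n : ℝ)]).restrict (Sph n)

instance sμ_finite (n : ℕ) : IsFiniteMeasure (sμ n) := by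
  constructor
  rw [sμ, Measure.restrict_apply_univ]
  exact sphere_hmeas_lt_top n

/-- General integrability criterion on the sphere. -/
lemma integrable_sphere {n : ℕ} {F : Type*} [NormedAddCommGroup F]
    (f : EuclideanSpace ℝ (Fin (n+1)) → F) (hf : Continuous f) (C : ℝ)
    (hC : ∀ x, ‖x‖ = 1 → ‖f x‖ ≤ C) : Integrable f (sμ n) := by
  refine Integrable.mono' (integrable_const C) hf.aestronglyMeasurable ?_
  filter_upwards [ae_restrict_mem (measurableSet_Sph n)] with x hx
  exact hC x hx

lemma continuous_coord {N : ℕ} (k : Fin N) :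
    Continuous fun x : EuclideanSpace ℝ (Fin N) => x k :=
  (EuclideanSpace.proj (𝕜 := ℝ) k).continuous

/-! ### Rotations -/

section Rotation

variable {n : ℕ} (a b : Fin (n+1))

/-- Rotation in the `(a, b)`-coordinate plane by angle `t`. -/
def rot (t : ℝ) (x : EuclideanSpace ℝ (Fin (n+1))) : EuclideanSpace ℝ (Fin (n+1)) :=
  (WithLp.equiv 2 _).symm (fun k =>
    if k = a then Real.cos t * x a - Real.sin t * x b
    else if k = b then Real.sin t * x a + Real.cos t * x b
    else x k)

lemma rot_apply_a (t : ℝ) (x : EuclideanSpace ℝ (Fin (n+1))) :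
    rot a b t x a = Real.cos t * x a - Real.sin t * x b := by simp [rot]

lemma rot_apply_b (hab : a ≠ b) (t : ℝ) (x : EuclideanSpace ℝ (Fin (n+1))) :
    rot a b t x b = Real.sin t * x a + Real.cos t * x b := by
  have : ¬(b = a) := fun h => hab h.symm
  simp [rot, this]

lemma rot_apply_other (t : ℝ) (x : EuclideanSpace ℝ (Fin (n+1))) {k : Fin (n+1)}
    (hka : k ≠ a) (hkb : k ≠ b) : rot a b t x k = x k := by
  simp [rot, hka, hkb]

/-- Splitting a sum over two distinguished indices. -/
lemma sum_split {N : ℕ} {α : Type*} [AddCommMonoid α] (a b : Fin N) (hab : a ≠ b)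
    (f : Fin N → α) :
    ∑ k, f k = f a + (f b + ∑ k ∈ (Finset.univ.erase a).erase b, f k) := by
  rw [← Finset.add_sum_erase Finset.univ f (Finset.mem_univ a)]
  congr 1
  rw [← Finset.add_sum_erase (Finset.univ.erase a) f
    (Finset.mem_erase.mpr ⟨hab.symm, Finset.mem_univ b⟩)]

lemma rot_isometry (hab : a ≠ b) (t : ℝ) : Isometry (rot a b t) := by
  refine Isometry.of_dist_eq fun x y => ?_
  rw [EuclideanSpace.dist_eq, EuclideanSpace.dist_eq]
  congr 1
  rw [sum_split a b hab (fun k => dist (rot a b t x k) (rot a b t y k) ^ 2),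
    sum_split a b hab (fun k => dist (x k) (y k) ^ 2)]
  have hrest : ∑ k ∈ (Finset.univ.erase a).erase b, dist (rot a b t x k) (rot a b t y k) ^ 2
      = ∑ k ∈ (Finset.univ.erase a).erase b, dist (x k) (y k) ^ 2 := by
    refine Finset.sum_congr rfl fun k hk => ?_
    have hkb : k ≠ b := (Finset.mem_erase.mp hk).1
    have hka : k ≠ a := (Finset.mem_erase.mp (Finset.mem_erase.mp hk).2).1
    rw [rot_apply_other a b t x hka hkb, rot_apply_other a b t y hka hkb]
  rw [hrest, rot_apply_a a b t x, rot_apply_a a b t y, rot_apply_b a b hab t x,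
    rot_apply_b a b hab t y]
  simp only [Real.dist_eq, sq_abs]
  linear_combination ((x a - y a) ^ 2 + (x b - y b) ^ 2) * Real.sin_sq_add_cos_sq t

lemma rot_rot_neg (hab : a ≠ b) (t : ℝ) (x : EuclideanSpace ℝ (Fin (n+1))) :
    rot a b (-t) (rot a b t x) = x := by
  ext k
  by_cases hka : k = a
  · rw [hka]
    rw [rot_apply_a, Real.cos_neg, Real.sin_neg, rot_apply_a, rot_apply_b a b hab t x]
    linear_combination (x a) * Real.sin_sq_add_cos_sq t
  · by_cases hkb : k = b
    · rw [hkb]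
      rw [rot_apply_b a b hab (-t), Real.cos_neg, Real.sin_neg, rot_apply_a,
        rot_apply_b a b hab t x]
      linear_combination (x b) * Real.sin_sq_add_cos_sq t
    · rw [rot_apply_other a b (-t) _ hka hkb, rot_apply_other a b t x hka hkb]

lemma rot_norm (hab : a ≠ b) (t : ℝ) (x : EuclideanSpace ℝ (Fin (n+1))) : ‖rot a b t x‖ = ‖x‖ := by
  have h0 : rot a b t 0 = 0 := by
    ext k
    by_cases hka : k = a
    · rw [hka, rot_apply_a]; simp
    · by_cases hkb : k = b
      · rw [hkb, rot_apply_b a b hab t]; simp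
      · rw [rot_apply_other a b t _ hka hkb]
  calc ‖rot a b t x‖ = dist (rot a b t x) (rot a b t 0) := by rw [h0, dist_zero_right]
    _ = dist x 0 := (rot_isometry a b hab t).dist_eq x 0
    _ = ‖x‖ := dist_zero_right x

/-- The rotation as an isometry equivalence. -/
def rotIso (hab : a ≠ b) (t : ℝ) :
    EuclideanSpace ℝ (Fin (n+1)) ≃ᵢ EuclideanSpace ℝ (Fin (n+1)) where
  toFun := rot a b t
  invFun := rot a b (-t)
  left_inv := rot_rot_neg a b hab t
  right_inv := fun y => by
    have := rot_rot_neg a b hab (-t) y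
    rwa [neg_neg] at this
  isometry_toFun := rot_isometry a b hab t

lemma rot_preimage_Sph (hab : a ≠ b) (t : ℝ) : rot a b t ⁻¹' (Sph n) = Sph n := by
  ext x
  simp only [Set.mem_preimage, Sph, Set.mem_setOf_eq]
  rw [rot_norm a b hab t]

lemma rot_measurePreserving (hab : a ≠ b) (t : ℝ) : MeasurePreserving (rot a b t) (sμ n) (sμ n) := by
  have hcont : Continuous (rot a b t) := (rot_isometry a b hab t).continuous
  refine ⟨hcont.measurable, ?_⟩
  have h1 : Measure.map (rot a b t) μH[(n : ℝ)] = μH[(n : ℝ)] :=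
    (rotIso a b hab t).map_hausdorffMeasure (n : ℝ)
  calc Measure.map (rot a b t) (sμ n)
      = Measure.map (rot a b t) (μH[(n : ℝ)].restrict (rot a b t ⁻¹' Sph n)) := by
        rw [rot_preimage_Sph a b hab t]; rfl
    _ = (Measure.map (rot a b t) μH[(n : ℝ)]).restrict (Sph n) :=
        (Measure.restrict_map hcont.measurable (measurableSet_Sph n)).symm
    _ = sμ n := by rw [h1]; rfl

lemma rot_integral_comp (hab : a ≠ b) (t : ℝ) (h : EuclideanSpace ℝ (Fin (n+1)) → ℝ) :
    ∫ x, h (rot a b t x) ∂ sμ n = ∫ x, h x ∂ sμ n :=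
  (rot_measurePreserving a b hab t).integral_comp
    ((rotIso a b hab t).toHomeomorph.measurableEmbedding) h

end Rotation

/-! ### Moments and the rotation identity -/

section Moments

variable {n : ℕ}

/-- The quadratic form in the exponent of the Bingham density. -/
def qf (θ : Fin (n+1) → ℝ) (x : EuclideanSpace ℝ (Fin (n+1))) : ℝ := ∑ k, θ k * x k ^ 2

lemma continuous_qf (θ : Fin (n+1) → ℝ) : Continuous (qf θ) :=
  continuous_finset_sum _ fun k _ => continuous_const.mul ((continuous_coord k).pow 2)

lemma qf_le (θ : Fin (n+1) → ℝ) {x : EuclideanSpace ℝ (Fin (n+1))} (hx : ‖x‖ = 1) :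
    qf θ x ≤ ∑ k, |θ k| := by
  refine Finset.sum_le_sum fun k _ => ?_
  calc θ k * x k ^ 2 ≤ |θ k| * x k ^ 2 :=
        mul_le_mul_of_nonneg_right (le_abs_self _) (sq_nonneg _)
    _ ≤ |θ k| * 1 := mul_le_mul_of_nonneg_left (sq_le_one_of_norm_one hx k) (abs_nonneg _)
    _ = |θ k| := mul_one _

/-- `C(θ)` as an integral against the sphere measure. -/
def Cint (θ : Fin (n+1) → ℝ) : ℝ := ∫ x, Real.exp (qf θ x) ∂ sμ n

/-- Second-order moments `∂C/∂θₖ`. -/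
def Mint (θ : Fin (n+1) → ℝ) (k : Fin (n+1)) : ℝ :=
  ∫ x, x k ^ 2 * Real.exp (qf θ x) ∂ sμ n

/-- Fourth-order moments `∂²C/∂θₖ∂θₗ`. -/
def M2int (θ : Fin (n+1) → ℝ) (k l : Fin (n+1)) : ℝ :=
  ∫ x, x k ^ 2 * x l ^ 2 * Real.exp (qf θ x) ∂ sμ n

lemma integrable_mul_exp_qf (θ : Fin (n+1) → ℝ) (g : EuclideanSpace ℝ (Fin (n+1)) → ℝ)
    (hg : Continuous g) (C : ℝ) (hC0 : 0 ≤ C) (hC : ∀ x, ‖x‖ = 1 → |g x| ≤ C) :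
    Integrable (fun x => g x * Real.exp (qf θ x)) (sμ n) := by
  refine integrable_sphere _ (hg.mul (Real.continuous_exp.comp (continuous_qf θ)))
    (C * Real.exp (∑ k, |θ k|)) fun x hx => ?_
  rw [Real.norm_eq_abs, abs_mul, abs_of_pos (Real.exp_pos _)]
  exact mul_le_mul (hC x hx) (Real.exp_le_exp.mpr (qf_le θ hx)) (Real.exp_pos _).le hC0

lemma integrable_exp_qf (θ : Fin (n+1) → ℝ) :
    Integrable (fun x => Real.exp (qf θ x)) (sμ n) := by
  have := integrable_mul_exp_qf θ (fun _ => 1) continuous_const 1 zero_le_one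
    (fun x _ => by norm_num)
  simpa using this

lemma integrable_sq_exp_qf (θ : Fin (n+1) → ℝ) (k : Fin (n+1)) :
    Integrable (fun x => x k ^ 2 * Real.exp (qf θ x)) (sμ n) :=
  integrable_mul_exp_qf θ _ ((continuous_coord k).pow 2) 1 zero_le_one
    (fun x hx => by rw [abs_of_nonneg (sq_nonneg _)]; exact sq_le_one_of_norm_one hx k)

lemma integrable_sq_sq_exp_qf (θ : Fin (n+1) → ℝ) (k l : Fin (n+1)) :
    Integrable (fun x => x k ^ 2 * x l ^ 2 * Real.exp (qf θ x)) (sμ n) := by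
  refine integrable_mul_exp_qf θ _ (((continuous_coord k).pow 2).mul
    ((continuous_coord l).pow 2)) 1 zero_le_one (fun x hx => ?_)
  rw [abs_of_nonneg (by positivity)]
  calc x k ^ 2 * x l ^ 2 ≤ 1 * 1 :=
        mul_le_mul (sq_le_one_of_norm_one hx k) (sq_le_one_of_norm_one hx l)
          (sq_nonneg _) zero_le_one
    _ = 1 := one_mul 1

/-- Pointwise derivative of the rotated integrand. -/
lemma hasDerivAt_rot_point (θa θb W xa xb t : ℝ) :
    HasDerivAt (fun s => (Real.cos s * xa - Real.sin s * xb) * (Real.sin s * xa + Real.cos s * xb)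
        * Real.exp (θa * (Real.cos s * xa - Real.sin s * xb) ^ 2
          + (θb * (Real.sin s * xa + Real.cos s * xb) ^ 2 + W)))
      (((Real.cos t * xa - Real.sin t * xb) ^ 2 - (Real.sin t * xa + Real.cos t * xb) ^ 2
          + 2 * (θb - θa) * ((Real.cos t * xa - Real.sin t * xb) ^ 2
            * (Real.sin t * xa + Real.cos t * xb) ^ 2))
        * Real.exp (θa * (Real.cos t * xa - Real.sin t * xb) ^ 2
          + (θb * (Real.sin t * xa + Real.cos t * xb) ^ 2 + W))) t := by
  have hP : HasDerivAt (fun s => Real.cos s * xa - Real.sin s * xb)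
      (-Real.sin t * xa - Real.cos t * xb) t :=
    ((Real.hasDerivAt_cos t).mul_const xa).sub ((Real.hasDerivAt_sin t).mul_const xb)
  have hQ : HasDerivAt (fun s => Real.sin s * xa + Real.cos s * xb)
      (Real.cos t * xa + -Real.sin t * xb) t :=
    ((Real.hasDerivAt_sin t).mul_const xa).add ((Real.hasDerivAt_cos t).mul_const xb)
  have hE := (((hP.pow 2).const_mul θa).add (((hQ.pow 2).const_mul θb).add_const W))
  have hprod := (hP.mul hQ).mul hE.exp
  exact hprod.congr_deriv (by simp only [Pi.add_apply, Pi.mul_apply, Pi.pow_apply]; ring)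

/-- The key moment identity, obtained from rotation invariance of the sphere measure. -/
lemma moment_rot_identity (θ : Fin (n+1) → ℝ) (a b : Fin (n+1)) (hab : a ≠ b) :
    Mint θ a - Mint θ b + 2 * (θ b - θ a) * M2int θ a b = 0 := by
  classical
  set W : EuclideanSpace ℝ (Fin (n+1)) → ℝ :=
    fun x => ∑ k ∈ (Finset.univ.erase a).erase b, θ k * x k ^ 2 with hWdef
  have hWcont : Continuous W :=
    continuous_finset_sum _ fun k _ => continuous_const.mul ((continuous_coord k).pow 2)
  have hsplit : ∀ x : EuclideanSpace ℝ (Fin (n+1)),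
      qf θ x = θ a * x a ^ 2 + (θ b * x b ^ 2 + W x) :=
    fun x => sum_split a b hab (fun k => θ k * x k ^ 2)
  -- the deformed integrand and its `t`-derivative
  set F : ℝ → EuclideanSpace ℝ (Fin (n+1)) → ℝ := fun t x =>
    (Real.cos t * x a - Real.sin t * x b) * (Real.sin t * x a + Real.cos t * x b)
      * Real.exp (θ a * (Real.cos t * x a - Real.sin t * x b) ^ 2
        + (θ b * (Real.sin t * x a + Real.cos t * x b) ^ 2 + W x)) with hFdef
  set F' : ℝ → EuclideanSpace ℝ (Fin (n+1)) → ℝ := fun t x =>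
    ((Real.cos t * x a - Real.sin t * x b) ^ 2 - (Real.sin t * x a + Real.cos t * x b) ^ 2
        + 2 * (θ b - θ a) * ((Real.cos t * x a - Real.sin t * x b) ^ 2
          * (Real.sin t * x a + Real.cos t * x b) ^ 2))
      * Real.exp (θ a * (Real.cos t * x a - Real.sin t * x b) ^ 2
        + (θ b * (Real.sin t * x a + Real.cos t * x b) ^ 2 + W x)) with hF'def
  have hWrot : ∀ t x, W (rot a b t x) = W x := by
    intro t x
    refine Finset.sum_congr rfl fun k hk => ?_
    have hkb : k ≠ b := (Finset.mem_erase.mp hk).1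
    have hka : k ≠ a := (Finset.mem_erase.mp (Finset.mem_erase.mp hk).2).1
    rw [rot_apply_other a b t x hka hkb]
  have hFrot : ∀ t x, F t x
      = (rot a b t x) a * (rot a b t x) b * Real.exp (qf θ (rot a b t x)) := by
    intro t x
    rw [hsplit (rot a b t x), hWrot t x, rot_apply_a, rot_apply_b a b hab]
  -- the integral of `F t` does not depend on `t`
  have hFconst : ∀ t, ∫ x, F t x ∂ sμ n = ∫ x, F 0 x ∂ sμ n := by
    intro t
    have h1 : ∫ x, F t x ∂ sμ n
        = ∫ x, (fun y => y a * y b * Real.exp (qf θ y)) (rot a b t x) ∂ sμ n := by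
      refine integral_congr_ae (Filter.Eventually.of_forall fun x => ?_)
      exact hFrot t x
    have h0 : ∫ x, F 0 x ∂ sμ n
        = ∫ x, (fun y => y a * y b * Real.exp (qf θ y)) (rot a b 0 x) ∂ sμ n := by
      refine integral_congr_ae (Filter.Eventually.of_forall fun x => ?_)
      exact hFrot 0 x
    rw [h1, h0, rot_integral_comp a b hab t (fun y => y a * y b * Real.exp (qf θ y)),
      rot_integral_comp a b hab 0 (fun y => y a * y b * Real.exp (qf θ y))]
  -- pointwise bounds on the sphere
  have hsum_ab : ∀ x : EuclideanSpace ℝ (Fin (n+1)), ‖x‖ = 1 → x a ^ 2 + x b ^ 2 ≤ 1 := by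
    intro x hx
    have h1 := sum_sq_eq_one hx
    have h2 : (0:ℝ) ≤ ∑ k ∈ (Finset.univ.erase a).erase b, x k ^ 2 := by positivity
    have h3 := sum_split a b hab (fun k => x k ^ 2)
    linarith [h3.symm.trans h1]
  have hexp_bound : ∀ (t : ℝ) (x : EuclideanSpace ℝ (Fin (n+1))), ‖x‖ = 1 →
      θ a * (Real.cos t * x a - Real.sin t * x b) ^ 2
        + (θ b * (Real.sin t * x a + Real.cos t * x b) ^ 2 + W x) ≤ ∑ k, |θ k| := by
    intro t x hx
    have hPQ : (Real.cos t * x a - Real.sin t * x b) ^ 2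
        + (Real.sin t * x a + Real.cos t * x b) ^ 2 = x a ^ 2 + x b ^ 2 := by
      linear_combination (x a ^ 2 + x b ^ 2) * Real.sin_sq_add_cos_sq t
    have hP1 : (Real.cos t * x a - Real.sin t * x b) ^ 2 ≤ 1 := by
      nlinarith [sq_nonneg (Real.sin t * x a + Real.cos t * x b), hsum_ab x hx]
    have hQ1 : (Real.sin t * x a + Real.cos t * x b) ^ 2 ≤ 1 := by
      nlinarith [sq_nonneg (Real.cos t * x a - Real.sin t * x b), hsum_ab x hx]
    have hW : W x ≤ ∑ k ∈ (Finset.univ.erase a).erase b, |θ k| := by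
      refine Finset.sum_le_sum fun k _ => ?_
      calc θ k * x k ^ 2 ≤ |θ k| * x k ^ 2 :=
            mul_le_mul_of_nonneg_right (le_abs_self _) (sq_nonneg _)
        _ ≤ |θ k| * 1 := mul_le_mul_of_nonneg_left (sq_le_one_of_norm_one hx k) (abs_nonneg _)
        _ = |θ k| := mul_one _
    have hsplitabs := sum_split a b hab (fun k => |θ k|)
    have hta : θ a * (Real.cos t * x a - Real.sin t * x b) ^ 2 ≤ |θ a| := by
      calc θ a * (Real.cos t * x a - Real.sin t * x b) ^ 2
          ≤ |θ a| * (Real.cos t * x a - Real.sin t * x b) ^ 2 :=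
            mul_le_mul_of_nonneg_right (le_abs_self _) (sq_nonneg _)
        _ ≤ |θ a| * 1 := mul_le_mul_of_nonneg_left hP1 (abs_nonneg _)
        _ = |θ a| := mul_one _
    have htb : θ b * (Real.sin t * x a + Real.cos t * x b) ^ 2 ≤ |θ b| := by
      calc θ b * (Real.sin t * x a + Real.cos t * x b) ^ 2
          ≤ |θ b| * (Real.sin t * x a + Real.cos t * x b) ^ 2 :=
            mul_le_mul_of_nonneg_right (le_abs_self _) (sq_nonneg _)
        _ ≤ |θ b| * 1 := mul_le_mul_of_nonneg_left hQ1 (abs_nonneg _)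
        _ = |θ b| := mul_one _
    linarith [hsplitabs]
  -- differentiation under the integral sign at `t = 0`
  have hasDeriv : HasDerivAt (fun t => ∫ x, F t x ∂ sμ n) (∫ x, F' 0 x ∂ sμ n) 0 := by
    refine (hasDerivAt_integral_of_dominated_loc_of_deriv_le (s := Metric.ball (0:ℝ) 1) (Metric.ball_mem_nhds (0:ℝ) one_pos)
      (Filter.Eventually.of_forall fun t => ?_) ?_ ?_
      (bound := fun _ => (2 + 2 * |θ b - θ a|) * Real.exp (∑ k, |θ k|)) ?_ ?_ ?_).2
    · -- measurability of F t
      refine Continuous.aestronglyMeasurable ?_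
      refine Continuous.mul (Continuous.mul ?_ ?_) (Real.continuous_exp.comp ?_)
      · exact ((continuous_const.mul (continuous_coord a)).sub
          (continuous_const.mul (continuous_coord b)))
      · exact ((continuous_const.mul (continuous_coord a)).add
          (continuous_const.mul (continuous_coord b)))
      · refine Continuous.add (Continuous.mul continuous_const (Continuous.pow ?_ 2))
          (Continuous.add (Continuous.mul continuous_const (Continuous.pow ?_ 2)) hWcont)
        · exact ((continuous_const.mul (continuous_coord a)).sub
            (continuous_const.mul (continuous_coord b)))
        · exact ((continuous_const.mul (continuous_coord a)).add
            (continuous_const.mul (continuous_coord b)))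
    · -- integrability of F 0
      refine integrable_sphere _ ?_ (Real.exp (∑ k, |θ k|)) ?_
      · refine Continuous.mul (Continuous.mul ?_ ?_) (Real.continuous_exp.comp ?_)
        · exact ((continuous_const.mul (continuous_coord a)).sub
            (continuous_const.mul (continuous_coord b)))
        · exact ((continuous_const.mul (continuous_coord a)).add
            (continuous_const.mul (continuous_coord b)))
        · refine Continuous.add (Continuous.mul continuous_const (Continuous.pow ?_ 2))
            (Continuous.add (Continuous.mul continuous_const (Continuous.pow ?_ 2)) hWcont)
          · exact ((continuous_const.mul (continuous_coord a)).sub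
              (continuous_const.mul (continuous_coord b)))
          · exact ((continuous_const.mul (continuous_coord a)).add
              (continuous_const.mul (continuous_coord b)))
      · intro x hx
        have hP1 : (Real.cos 0 * x a - Real.sin 0 * x b) ^ 2 ≤ 1 := by
          simp only [Real.cos_zero, Real.sin_zero, one_mul, zero_mul, sub_zero]
          exact sq_le_one_of_norm_one hx a
        have hQ1 : (Real.sin 0 * x a + Real.cos 0 * x b) ^ 2 ≤ 1 := by
          simp only [Real.cos_zero, Real.sin_zero, one_mul, zero_mul, zero_add]
          exact sq_le_one_of_norm_one hx b
        have hE := hexp_bound 0 x hx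
        rw [Real.norm_eq_abs, hFdef]
        simp only []
        rw [abs_mul, abs_mul]
        calc |Real.cos 0 * x a - Real.sin 0 * x b| * |Real.sin 0 * x a + Real.cos 0 * x b|
              * |Real.exp (θ a * (Real.cos 0 * x a - Real.sin 0 * x b) ^ 2
                + (θ b * (Real.sin 0 * x a + Real.cos 0 * x b) ^ 2 + W x))|
            ≤ 1 * 1 * Real.exp (∑ k, |θ k|) := by
              refine mul_le_mul (mul_le_mul ?_ ?_ (abs_nonneg _) zero_le_one) ?_
                (abs_nonneg _) (by norm_num)
              · rw [← Real.sqrt_one, ← Real.sqrt_sq_eq_abs]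
                exact Real.sqrt_le_sqrt hP1
              · rw [← Real.sqrt_one, ← Real.sqrt_sq_eq_abs]
                exact Real.sqrt_le_sqrt hQ1
              · rw [abs_of_pos (Real.exp_pos _)]
                exact Real.exp_le_exp.mpr hE
          _ = Real.exp (∑ k, |θ k|) := by ring
    · -- measurability of F' 0
      refine Continuous.aestronglyMeasurable ?_
      have hc1 : Continuous fun x : EuclideanSpace ℝ (Fin (n+1)) =>
          Real.cos 0 * x a - Real.sin 0 * x b :=
        ((continuous_const.mul (continuous_coord a)).sub
          (continuous_const.mul (continuous_coord b)))
      have hc2 : Continuous fun x : EuclideanSpace ℝ (Fin (n+1)) =>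
          Real.sin 0 * x a + Real.cos 0 * x b :=
        ((continuous_const.mul (continuous_coord a)).add
          (continuous_const.mul (continuous_coord b)))
      refine Continuous.mul ?_ (Real.continuous_exp.comp ?_)
      · exact ((hc1.pow 2).sub (hc2.pow 2)).add
          (continuous_const.mul ((hc1.pow 2).mul (hc2.pow 2)))
      · exact (continuous_const.mul (hc1.pow 2)).add
          ((continuous_const.mul (hc2.pow 2)).add hWcont)
    · -- uniform bound on F' t
      filter_upwards [ae_restrict_mem (measurableSet_Sph n)] with x hx
      intro t ht
      have hx1 : ‖x‖ = 1 := hx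
      have hPQ : (Real.cos t * x a - Real.sin t * x b) ^ 2
          + (Real.sin t * x a + Real.cos t * x b) ^ 2 = x a ^ 2 + x b ^ 2 := by
        linear_combination (x a ^ 2 + x b ^ 2) * Real.sin_sq_add_cos_sq t
      have hP1 : (Real.cos t * x a - Real.sin t * x b) ^ 2 ≤ 1 := by
        nlinarith [sq_nonneg (Real.sin t * x a + Real.cos t * x b), hsum_ab x hx1]
      have hQ1 : (Real.sin t * x a + Real.cos t * x b) ^ 2 ≤ 1 := by
        nlinarith [sq_nonneg (Real.cos t * x a - Real.sin t * x b), hsum_ab x hx1]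
      have hE := hexp_bound t x hx1
      rw [Real.norm_eq_abs, hF'def]
      simp only []
      rw [abs_mul]
      have h1 : |(Real.cos t * x a - Real.sin t * x b) ^ 2
          - (Real.sin t * x a + Real.cos t * x b) ^ 2
          + 2 * (θ b - θ a) * ((Real.cos t * x a - Real.sin t * x b) ^ 2
            * (Real.sin t * x a + Real.cos t * x b) ^ 2)| ≤ 2 + 2 * |θ b - θ a| := by
        have h2 : |(Real.cos t * x a - Real.sin t * x b) ^ 2
            - (Real.sin t * x a + Real.cos t * x b) ^ 2| ≤ 2 := by
          rw [abs_le]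
          constructor <;> nlinarith [sq_nonneg (Real.cos t * x a - Real.sin t * x b),
            sq_nonneg (Real.sin t * x a + Real.cos t * x b)]
        have h3 : |2 * (θ b - θ a) * ((Real.cos t * x a - Real.sin t * x b) ^ 2
            * (Real.sin t * x a + Real.cos t * x b) ^ 2)| ≤ 2 * |θ b - θ a| := by
          rw [abs_mul, abs_mul]
          rw [abs_of_nonneg (show (0:ℝ) ≤ (2:ℝ) by norm_num)]
          have h4 : |(Real.cos t * x a - Real.sin t * x b) ^ 2
              * (Real.sin t * x a + Real.cos t * x b) ^ 2| ≤ 1 := by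
            rw [abs_mul, abs_of_nonneg (sq_nonneg _), abs_of_nonneg (sq_nonneg _)]
            calc (Real.cos t * x a - Real.sin t * x b) ^ 2
                  * (Real.sin t * x a + Real.cos t * x b) ^ 2 ≤ 1 * 1 :=
                  mul_le_mul hP1 hQ1 (sq_nonneg _) zero_le_one
              _ = 1 := one_mul 1
          calc 2 * |θ b - θ a| * |(Real.cos t * x a - Real.sin t * x b) ^ 2
                * (Real.sin t * x a + Real.cos t * x b) ^ 2|
              ≤ 2 * |θ b - θ a| * 1 := mul_le_mul_of_nonneg_left h4 (by positivity)
            _ = 2 * |θ b - θ a| := mul_one _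
        calc |(Real.cos t * x a - Real.sin t * x b) ^ 2
            - (Real.sin t * x a + Real.cos t * x b) ^ 2
            + 2 * (θ b - θ a) * ((Real.cos t * x a - Real.sin t * x b) ^ 2
              * (Real.sin t * x a + Real.cos t * x b) ^ 2)|
            ≤ |(Real.cos t * x a - Real.sin t * x b) ^ 2
              - (Real.sin t * x a + Real.cos t * x b) ^ 2|
              + |2 * (θ b - θ a) * ((Real.cos t * x a - Real.sin t * x b) ^ 2
                * (Real.sin t * x a + Real.cos t * x b) ^ 2)| := abs_add_le _ _
          _ ≤ 2 + 2 * |θ b - θ a| := add_le_add h2 h3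
      have h5 : |Real.exp (θ a * (Real.cos t * x a - Real.sin t * x b) ^ 2
          + (θ b * (Real.sin t * x a + Real.cos t * x b) ^ 2 + W x))|
          ≤ Real.exp (∑ k, |θ k|) := by
        rw [abs_of_pos (Real.exp_pos _)]
        exact Real.exp_le_exp.mpr hE
      calc _ ≤ (2 + 2 * |θ b - θ a|) * Real.exp (∑ k, |θ k|) :=
            mul_le_mul h1 h5 (abs_nonneg _) (by positivity)
        _ = _ := rfl
    · exact integrable_const _
    · -- pointwise differentiability
      filter_upwards with x
      intro t ht
      exact hasDerivAt_rot_point (θ a) (θ b) (W x) (x a) (x b) t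
  -- the integral is constant, so the derivative vanishes
  have hzero : ∫ x, F' 0 x ∂ sμ n = 0 := by
    have hconstfun : (fun t => ∫ x, F t x ∂ sμ n) = fun _ => ∫ x, F 0 x ∂ sμ n :=
      funext hFconst
    rw [hconstfun] at hasDeriv
    exact hasDeriv.unique (hasDerivAt_const 0 _)
  -- rewrite the derivative integrand in terms of the moments
  have hF'eq : ∀ x : EuclideanSpace ℝ (Fin (n+1)), F' 0 x
      = x a ^ 2 * Real.exp (qf θ x) - x b ^ 2 * Real.exp (qf θ x)
        + (2 * (θ b - θ a)) * (x a ^ 2 * x b ^ 2 * Real.exp (qf θ x)) := by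
    intro x
    rw [hF'def]
    simp only [Real.cos_zero, Real.sin_zero, one_mul, zero_mul, sub_zero, zero_add]
    rw [hsplit x]
    ring
  have hint : ∫ x, F' 0 x ∂ sμ n
      = Mint θ a - Mint θ b + 2 * (θ b - θ a) * M2int θ a b := by
    have hcongr : ∫ x, F' 0 x ∂ sμ n
        = ∫ x, (x a ^ 2 * Real.exp (qf θ x) - x b ^ 2 * Real.exp (qf θ x)
          + (2 * (θ b - θ a)) * (x a ^ 2 * x b ^ 2 * Real.exp (qf θ x))) ∂ sμ n :=
      integral_congr_ae (Filter.Eventually.of_forall hF'eq)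
    rw [hcongr, integral_add, integral_sub, integral_const_mul]
    · rfl
    · exact integrable_sq_exp_qf θ a
    · exact integrable_sq_exp_qf θ b
    · exact (integrable_sq_exp_qf θ a).sub (integrable_sq_exp_qf θ b)
    · exact (integrable_sq_sq_exp_qf θ a b).const_mul _
  rw [← hint, hzero]

end Moments

/-! ### Derivatives in the parameters -/

section Param

variable {m : ℕ}

/-- Quadratic form with the last parameter fixed to `0`, as a function of free parameters. -/
def Qp (ψ : Fin m → ℝ) (x : EuclideanSpace ℝ (Fin (m+1))) : ℝ :=
  ∑ i, ψ i * x (Fin.castSucc i) ^ 2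

lemma Qp_eq_qf (ψ : Fin m → ℝ) (x : EuclideanSpace ℝ (Fin (m+1))) :
    Qp ψ x = qf (Fin.snoc ψ 0) x := by
  rw [qf, Fin.sum_univ_castSucc]
  simp [Qp]

lemma Qp_le (ψ : Fin m → ℝ) {x : EuclideanSpace ℝ (Fin (m+1))} (hx : ‖x‖ = 1) :
    Qp ψ x ≤ ∑ i, |ψ i| := by
  refine Finset.sum_le_sum fun i _ => ?_
  calc ψ i * x (Fin.castSucc i) ^ 2 ≤ |ψ i| * x (Fin.castSucc i) ^ 2 :=
        mul_le_mul_of_nonneg_right (le_abs_self _) (sq_nonneg _)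
    _ ≤ |ψ i| * 1 := mul_le_mul_of_nonneg_left (sq_le_one_of_norm_one hx _) (abs_nonneg _)
    _ = |ψ i| := mul_one _

lemma continuous_Qp (ψ : Fin m → ℝ) : Continuous (Qp ψ) :=
  continuous_finset_sum _ fun i _ => continuous_const.mul ((continuous_coord _).pow 2)

/-- The linear functional `v ↦ ∑ i, v i * x (castSucc i) ^ 2`. -/
def Lx (x : EuclideanSpace ℝ (Fin (m+1))) : (Fin m → ℝ) →L[ℝ] ℝ :=
  ∑ i, x (Fin.castSucc i) ^ 2 • ContinuousLinearMap.proj i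

lemma Lx_apply (x : EuclideanSpace ℝ (Fin (m+1))) (v : Fin m → ℝ) :
    Lx x v = ∑ i, x (Fin.castSucc i) ^ 2 * v i := by
  simp [Lx, ContinuousLinearMap.sum_apply, ContinuousLinearMap.smul_apply,
    ContinuousLinearMap.proj_apply, smul_eq_mul]

lemma Lx_single (x : EuclideanSpace ℝ (Fin (m+1))) (i : Fin m) :
    Lx x (Pi.single i 1) = x (Fin.castSucc i) ^ 2 := by
  rw [Lx_apply, Finset.sum_eq_single i]
  · simp
  · intro j _ hj
    simp [Pi.single_eq_of_ne hj]
  · intro h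
    exact absurd (Finset.mem_univ i) h

lemma Lx_norm_le (x : EuclideanSpace ℝ (Fin (m+1))) (hx : ‖x‖ = 1) : ‖Lx x‖ ≤ (m : ℝ) := by
  refine ContinuousLinearMap.opNorm_le_bound _ (Nat.cast_nonneg m) fun v => ?_
  rw [Real.norm_eq_abs, Lx_apply]
  calc |∑ i, x (Fin.castSucc i) ^ 2 * v i| ≤ ∑ i, |x (Fin.castSucc i) ^ 2 * v i| :=
        Finset.abs_sum_le_sum_abs _ _
    _ ≤ ∑ _i : Fin m, ‖v‖ := by
        refine Finset.sum_le_sum fun i _ => ?_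
        rw [abs_mul, abs_of_nonneg (sq_nonneg _)]
        calc x (Fin.castSucc i) ^ 2 * |v i| ≤ 1 * ‖v‖ := by
              refine mul_le_mul (sq_le_one_of_norm_one hx _) ?_ (abs_nonneg _) zero_le_one
              exact (norm_le_pi_norm v i)
          _ = ‖v‖ := one_mul _
    _ = (m : ℝ) * ‖v‖ := by
        rw [Finset.sum_const, Finset.card_univ, Fintype.card_fin, nsmul_eq_mul]

lemma continuous_Lx : Continuous fun x : EuclideanSpace ℝ (Fin (m+1)) => Lx x :=
  continuous_finset_sum _ fun i _ =>
    (((continuous_coord _).pow 2).smul continuous_const)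

lemma hasFDerivAt_exp_Qp (x : EuclideanSpace ℝ (Fin (m+1))) (ψ : Fin m → ℝ) :
    HasFDerivAt (fun ψ' => Real.exp (Qp ψ' x)) (Real.exp (Qp ψ x) • Lx x) ψ := by
  have h1 : HasFDerivAt (fun ψ' => Qp ψ' x) (Lx x) ψ := by
    have heq : (fun ψ' : Fin m → ℝ => Qp ψ' x) = fun ψ' => Lx x ψ' := by
      funext ψ'
      rw [Lx_apply, Qp]
      exact Finset.sum_congr rfl fun i _ => mul_comm _ _
    rw [heq]
    exact (Lx x).hasFDerivAt
  exact h1.exp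

/-- Differentiation under the integral sign in the parameters. -/
lemma hasFDerivAt_param (g : EuclideanSpace ℝ (Fin (m+1)) → ℝ) (hg : Continuous g)
    (hgb : ∀ x, ‖x‖ = 1 → |g x| ≤ 1) (ψ : Fin m → ℝ) :
    HasFDerivAt (fun ψ' => ∫ x, g x * Real.exp (Qp ψ' x) ∂ sμ m)
      (∫ x, (g x * Real.exp (Qp ψ x)) • Lx x ∂ sμ m) ψ := by
  have hQbd : ∀ ψ' : Fin m → ℝ, ψ' ∈ Metric.ball ψ 1 →
      ∀ x : EuclideanSpace ℝ (Fin (m+1)), ‖x‖ = 1 → Qp ψ' x ≤ ∑ i, (|ψ i| + 1) := by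
    intro ψ' hψ' x hx
    refine (Qp_le ψ' hx).trans (Finset.sum_le_sum fun i _ => ?_)
    have h1 : |ψ' i - ψ i| ≤ dist ψ' ψ := by
      rw [dist_eq_norm]
      exact norm_le_pi_norm (ψ' - ψ) i
    have h2 : dist ψ' ψ < 1 := Metric.mem_ball.mp hψ'
    calc |ψ' i| = |ψ i + (ψ' i - ψ i)| := by ring_nf
      _ ≤ |ψ i| + |ψ' i - ψ i| := abs_add_le _ _
      _ ≤ |ψ i| + 1 := by linarith
  have hgexp_cont : ∀ ψ' : Fin m → ℝ,
      Continuous fun x => g x * Real.exp (Qp ψ' x) :=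
    fun ψ' => hg.mul (Real.continuous_exp.comp (continuous_Qp ψ'))
  refine hasFDerivAt_integral_of_dominated_of_fderiv_le (𝕜 := ℝ) (s := Metric.ball ψ 1)
    (F' := fun ψ' x => (g x * Real.exp (Qp ψ' x)) • Lx x) (Metric.ball_mem_nhds ψ one_pos)
    (Filter.Eventually.of_forall fun ψ' => (hgexp_cont ψ').aestronglyMeasurable) ?_ ?_
    (bound := fun _ => Real.exp (∑ i, (|ψ i| + 1)) * (m : ℝ)) ?_ ?_ ?_
  · -- integrability of F ψ
    exact integrable_sphere _ (hgexp_cont ψ) (1 * Real.exp (∑ i, (|ψ i| + 1))) fun x hx => by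
      rw [Real.norm_eq_abs, abs_mul, abs_of_pos (Real.exp_pos _)]
      refine mul_le_mul (hgb x hx) (Real.exp_le_exp.mpr ?_) (Real.exp_pos _).le zero_le_one
      exact (hQbd ψ (Metric.mem_ball_self one_pos) x hx)
  · -- measurability of F' ψ
    exact (((hg.mul (Real.continuous_exp.comp (continuous_Qp ψ))).smul
      continuous_Lx)).aestronglyMeasurable
  · -- bound
    filter_upwards [ae_restrict_mem (measurableSet_Sph m)] with x hx
    intro ψ' hψ'
    have hx1 : ‖x‖ = 1 := hx
    refine le_trans (ContinuousLinearMap.opNorm_smul_le _ _) ?_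
    rw [Real.norm_eq_abs, abs_mul, abs_of_pos (Real.exp_pos _)]
    calc |g x| * Real.exp (Qp ψ' x) * ‖Lx x‖
        ≤ 1 * Real.exp (∑ i, (|ψ i| + 1)) * (m : ℝ) := by
          refine mul_le_mul ?_ (Lx_norm_le x hx1) (norm_nonneg _) (by positivity)
          exact mul_le_mul (hgb x hx1) (Real.exp_le_exp.mpr (hQbd ψ' hψ' x hx1))
            (Real.exp_pos _).le zero_le_one
      _ = Real.exp (∑ i, (|ψ i| + 1)) * (m : ℝ) := by ring
  · exact integrable_const _
  · -- differentiability
    filter_upwards with x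
    intro ψ' hψ'
    have h1 := (hasFDerivAt_exp_Qp x ψ').const_mul (g x)
    have h2 : g x • (Real.exp (Qp ψ' x) • Lx x) = (g x * Real.exp (Qp ψ' x)) • Lx x :=
      smul_smul _ _ _
    rw [h2] at h1
    exact h1

lemma integrable_smul_Lx (g : EuclideanSpace ℝ (Fin (m+1)) → ℝ) (hg : Continuous g)
    (hgb : ∀ x, ‖x‖ = 1 → |g x| ≤ 1) (ψ : Fin m → ℝ) :
    Integrable (fun x => (g x * Real.exp (Qp ψ x)) • Lx x) (sμ m) := by
  refine integrable_sphere _ ((hg.mul (Real.continuous_exp.comp (continuous_Qp ψ))).smul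
    continuous_Lx) (Real.exp (∑ i, |ψ i|) * (m : ℝ)) fun x hx => ?_
  refine le_trans (ContinuousLinearMap.opNorm_smul_le _ _) ?_
  rw [Real.norm_eq_abs, abs_mul, abs_of_pos (Real.exp_pos _)]
  calc |g x| * Real.exp (Qp ψ x) * ‖Lx x‖ ≤ 1 * Real.exp (∑ i, |ψ i|) * (m : ℝ) := by
        refine mul_le_mul ?_ (Lx_norm_le x hx) (norm_nonneg _) (by positivity)
        exact mul_le_mul (hgb x hx) (Real.exp_le_exp.mpr (Qp_le ψ hx))
          (Real.exp_pos _).le zero_le_one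
    _ = Real.exp (∑ i, |ψ i|) * (m : ℝ) := by ring

/-- Directional derivative of the parametric integral. -/
lemma fderiv_param_apply (g : EuclideanSpace ℝ (Fin (m+1)) → ℝ) (hg : Continuous g)
    (hgb : ∀ x, ‖x‖ = 1 → |g x| ≤ 1) (ψ : Fin m → ℝ) (i : Fin m) :
    fderiv ℝ (fun ψ' => ∫ x, g x * Real.exp (Qp ψ' x) ∂ sμ m) ψ (Pi.single i 1)
      = ∫ x, g x * Real.exp (Qp ψ x) * x (Fin.castSucc i) ^ 2 ∂ sμ m := by
  rw [(hasFDerivAt_param g hg hgb ψ).fderiv]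
  rw [ContinuousLinearMap.integral_apply (integrable_smul_Lx g hg hgb ψ)]
  refine integral_congr_ae (Filter.Eventually.of_forall fun x => ?_)
  simp only [ContinuousLinearMap.smul_apply, Lx_single, smul_eq_mul]

end Param

/-! ### Sum identities and the division form -/

section Identities

variable {n : ℕ}

lemma M2int_symm (θ : Fin (n+1) → ℝ) (k l : Fin (n+1)) : M2int θ k l = M2int θ l k := by
  rw [M2int, M2int]
  exact integral_congr_ae (Filter.Eventually.of_forall fun x => by ring)

lemma sum_Mint (θ : Fin (n+1) → ℝ) : ∑ k, Mint θ k = Cint θ := by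
  rw [show ∑ k, Mint θ k = ∫ x, ∑ k, x k ^ 2 * Real.exp (qf θ x) ∂ sμ n from
    (integral_finset_sum _ fun k _ => integrable_sq_exp_qf θ k).symm, Cint]
  refine integral_congr_ae ?_
  filter_upwards [ae_restrict_mem (measurableSet_Sph n)] with x hx
  rw [← Finset.sum_mul, sum_sq_eq_one hx, one_mul]

lemma sum_M2int (θ : Fin (n+1) → ℝ) (l : Fin (n+1)) :
    ∑ k, M2int θ k l = Mint θ l := by
  rw [show ∑ k, M2int θ k l = ∫ x, ∑ k, x k ^ 2 * x l ^ 2 * Real.exp (qf θ x) ∂ sμ n from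
    (integral_finset_sum _ fun k _ => integrable_sq_sq_exp_qf θ k l).symm, Mint]
  refine integral_congr_ae ?_
  filter_upwards [ae_restrict_mem (measurableSet_Sph n)] with x hx
  have h1 : ∀ k : Fin (n+1), x k ^ 2 * x l ^ 2 * Real.exp (qf θ x)
      = x k ^ 2 * (x l ^ 2 * Real.exp (qf θ x)) := fun k => by ring
  rw [Finset.sum_congr rfl fun k _ => h1 k, ← Finset.sum_mul, sum_sq_eq_one hx, one_mul]

lemma moment_div (θ : Fin (n+1) → ℝ) (a b : Fin (n+1)) (hab : a ≠ b) (hθ : θ a ≠ θ b) :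
    M2int θ a b = (Mint θ a - Mint θ b) / (2 * (θ a - θ b)) := by
  have h := moment_rot_identity θ a b hab
  have h2 : θ a - θ b ≠ 0 := sub_ne_zero.mpr hθ
  field_simp
  linarith

end Identities

/-! ### Bridge to `binghamC` -/

lemma binghamC_eq_Cint (m : ℕ) (θ : Fin (m+1) → ℝ) : binghamC (m+1) θ = Cint θ := by
  have h : ((m+1 : ℕ) : ℝ) - 1 = (m : ℝ) := by push_cast; ring
  rw [binghamC, h]
  rfl

end

end BinghamAux

open BinghamAux Fin

/-- Pfaffian system for `G̃ = (C, ∂₁C, …, ∂_{p-1}C)|_{θ_p = 0}` after removing the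
redundancy by fixing the last parameter to `0`.  Here `p = m + 1` with `m ≥ 1`,
the free parameters are `φ = (θ_1,…,θ_{p-1})`, assumed nonzero and pairwise
distinct. -/
theorem bingham_pfaffian_tilde (m : ℕ) (hm : 1 ≤ m) (φ : Fin m → ℝ)
    (h0 : ∀ i, φ i ≠ 0) (hdist : ∀ i j : Fin m, i ≠ j → φ i ≠ φ j) :
    let Ct : (Fin m → ℝ) → ℝ := fun ψ => binghamC (m + 1) (Fin.snoc ψ 0)
    let Gt : Fin m → (Fin m → ℝ) → ℝ := fun i ψ => fderiv ℝ Ct ψ (Pi.single i 1)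
    (∀ i : Fin m, fderiv ℝ Ct φ (Pi.single i 1) = Gt i φ)
    ∧ (∀ i j : Fin m, i ≠ j →
        fderiv ℝ (Gt j) φ (Pi.single i 1) = (Gt i φ - Gt j φ) / (2 * (φ i - φ j)))
    ∧ (∀ i : Fin m,
        fderiv ℝ (Gt i) φ (Pi.single i 1)
          = Gt i φ - (∑ k ∈ Finset.univ.erase i, (Gt i φ - Gt k φ) / (2 * (φ i - φ k)))
            - (Gt i φ - (Ct φ - ∑ ℓ, Gt ℓ φ)) / (2 * φ i)) := by
  classical
  intro Ct Gt
  -- `Ct` as a parametric integral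
  have hCtfun : Ct = fun ψ => ∫ x, Real.exp (Qp ψ x) ∂ sμ m := by
    funext ψ
    show binghamC (m+1) (Fin.snoc ψ 0) = _
    rw [binghamC_eq_Cint m (Fin.snoc ψ 0), Cint]
    exact integral_congr_ae (Filter.Eventually.of_forall fun x => by simp only [Qp_eq_qf])
  -- first derivative of `Ct`
  have hfC : ∀ (ψ : Fin m → ℝ) (i : Fin m),
      fderiv ℝ (fun ψ' => ∫ x, Real.exp (Qp ψ' x) ∂ sμ m) ψ (Pi.single i 1)
        = ∫ x, Real.exp (Qp ψ x) * x (Fin.castSucc i) ^ 2 ∂ sμ m := by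
    intro ψ i
    have h := fderiv_param_apply (fun _ => (1:ℝ)) continuous_const
      (fun x _ => by norm_num) ψ i
    simpa only [one_mul] using h
  -- `Gt` as parametric integrals
  have hGtfun : ∀ j : Fin m,
      Gt j = fun ψ => ∫ x, x (Fin.castSucc j) ^ 2 * Real.exp (Qp ψ x) ∂ sμ m := by
    intro j
    funext ψ
    show fderiv ℝ Ct ψ (Pi.single j 1) = _
    rw [hCtfun, hfC ψ j]
    exact integral_congr_ae (Filter.Eventually.of_forall fun x => mul_comm _ _)
  have hGtval : ∀ (k : Fin m) (ψ : Fin m → ℝ),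
      Gt k ψ = Mint (Fin.snoc ψ 0) (Fin.castSucc k) := by
    intro k ψ
    rw [hGtfun k]
    show (∫ x, x (Fin.castSucc k) ^ 2 * Real.exp (Qp ψ x) ∂ sμ m) = _
    rw [Mint]
    exact integral_congr_ae (Filter.Eventually.of_forall fun x => by simp only [Qp_eq_qf])
  -- second derivatives
  have hfM : ∀ (k : Fin (m+1)) (i : Fin m),
      fderiv ℝ (fun ψ' => ∫ x, x k ^ 2 * Real.exp (Qp ψ' x) ∂ sμ m) φ (Pi.single i 1)
        = ∫ x, x k ^ 2 * Real.exp (Qp φ x) * x (Fin.castSucc i) ^ 2 ∂ sμ m :=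
    fun k i => fderiv_param_apply (fun x => x k ^ 2) ((continuous_coord k).pow 2)
      (fun x hx => by
        rw [abs_of_nonneg (sq_nonneg _)]
        exact sq_le_one_of_norm_one hx k) φ i
  have hM2val : ∀ (k : Fin (m+1)) (i : Fin m),
      (∫ x, x k ^ 2 * Real.exp (Qp φ x) * x (Fin.castSucc i) ^ 2 ∂ sμ m)
        = M2int (Fin.snoc φ 0) k (Fin.castSucc i) := by
    intro k i
    rw [M2int]
    exact integral_congr_ae (Filter.Eventually.of_forall fun x => by simp only [Qp_eq_qf]; ring)
  have hLHS : ∀ (j i : Fin m),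
      fderiv ℝ (Gt j) φ (Pi.single i 1)
        = M2int (Fin.snoc φ 0) (Fin.castSucc j) (Fin.castSucc i) := by
    intro j i
    rw [hGtfun j, hfM (Fin.castSucc j) i, hM2val (Fin.castSucc j) i]
  -- snoc values
  have hsc : ∀ i : Fin m, (Fin.snoc φ 0 : Fin (m+1) → ℝ) (Fin.castSucc i) = φ i :=
    fun i => by simp
  have hsl : (Fin.snoc φ 0 : Fin (m+1) → ℝ) (Fin.last m) = 0 := by simp
  refine ⟨fun i => rfl, ?_, ?_⟩
  · -- the mixed second derivatives
    intro i j hij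
    rw [hLHS j i, hGtval i φ, hGtval j φ]
    rw [M2int_symm, moment_div (Fin.snoc φ 0) (Fin.castSucc i) (Fin.castSucc j)
      (fun h => hij (Fin.castSucc_injective m h))
      (by rw [hsc i, hsc j]; exact hdist i j hij)]
    rw [hsc i, hsc j]
  · -- the diagonal second derivatives
    intro i
    rw [hLHS i i]
    -- the missing moment via the trace identity
    have hlast : Ct φ - ∑ ℓ, Gt ℓ φ = Mint (Fin.snoc φ 0) (Fin.last m) := by
      have h1 : Ct φ = Cint (Fin.snoc φ 0) := binghamC_eq_Cint m (Fin.snoc φ 0)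
      have h2 : ∑ ℓ, Gt ℓ φ = ∑ ℓ : Fin m, Mint (Fin.snoc φ 0) (Fin.castSucc ℓ) :=
        Finset.sum_congr rfl fun ℓ _ => hGtval ℓ φ
      have h3 := sum_Mint (Fin.snoc φ 0)
      rw [Fin.sum_univ_castSucc] at h3
      rw [h1, h2]
      linarith
    have hterm_last : (Gt i φ - (Ct φ - ∑ ℓ, Gt ℓ φ)) / (2 * φ i)
        = M2int (Fin.snoc φ 0) (Fin.castSucc i) (Fin.last m) := by
      rw [hlast, hGtval i φ]
      rw [moment_div (Fin.snoc φ 0) (Fin.castSucc i) (Fin.last m)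
        (Fin.castSucc_lt_last i).ne (by rw [hsc i, hsl]; exact h0 i)]
      rw [hsc i, hsl, sub_zero]
    have hsum_er : ∑ k ∈ Finset.univ.erase i, (Gt i φ - Gt k φ) / (2 * (φ i - φ k))
        = ∑ k ∈ Finset.univ.erase i,
            M2int (Fin.snoc φ 0) (Fin.castSucc i) (Fin.castSucc k) := by
      refine Finset.sum_congr rfl fun k hk => ?_
      have hki : k ≠ i := (Finset.mem_erase.mp hk).1
      rw [hGtval i φ, hGtval k φ]
      rw [moment_div (Fin.snoc φ 0) (Fin.castSucc i) (Fin.castSucc k)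
        (fun h => hki.symm (Fin.castSucc_injective m h))
        (by rw [hsc i, hsc k]; exact hdist i k hki.symm)]
      rw [hsc i, hsc k]
    rw [hterm_last, hsum_er, hGtval i φ]
    -- the trace identity for the fourth moments
    have h4 := sum_M2int (Fin.snoc φ 0) (Fin.castSucc i)
    have h5 : ∑ k, M2int (Fin.snoc φ 0) k (Fin.castSucc i)
        = ∑ k, M2int (Fin.snoc φ 0) (Fin.castSucc i) k :=
      Finset.sum_congr rfl fun k _ => M2int_symm _ k _
    rw [h5, Fin.sum_univ_castSucc] at h4
    have h6 := Finset.add_sum_erase Finset.univ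
      (fun ℓ : Fin m => M2int (Fin.snoc φ 0) (Fin.castSucc i) (Fin.castSucc ℓ))
      (Finset.mem_univ i)
    linarith
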